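/- (Proposition 1, trace-commutation.) Let G = (V, E) be a finite simple graph, n ∈ ℕ, and σ : V → Fin n × Fin 3 an injective assignment of vertices to (qubit, slot) pairs such that adjacent vertices are assigned distinct qubits, i.e. G.Adj u v implies (σ u).1 ≠ (σ v).1. Then for every m : V → {−1,1}, the relaxed Hamiltonian H = Σ_{{u,v} ∈ E} (1/2)·(Id − 3·P_u·P_v) satisfies tr(H · F(m)) = cut(m) = Σ_{{u,v} ∈ E} (1/2)·(1 − m(u)·m(v)). -/

import Mathlib

open Matrix
open scoped Classical

/-- The Pauli `X` matrix. -/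
noncomputable def PX : Matrix (Fin 2) (Fin 2) ℂ := !![0, 1; 1, 0]

/-- The Pauli `Y` matrix. -/
noncomputable def PY : Matrix (Fin 2) (Fin 2) ℂ := !![0, -Complex.I; Complex.I, 0]

/-- The Pauli `Z` matrix. -/
noncomputable def PZ : Matrix (Fin 2) (Fin 2) ℂ := !![1, 0; 0, -1]

/-- The three non-identity Pauli matrices `q₁ = X, q₂ = Y, q₃ = Z` (slots indexed by `Fin 3`). -/
noncomputable def pauliXYZ : Fin 3 → Matrix (Fin 2) (Fin 2) ℂ := ![PX, PY, PZ]

/-- The `(3,1)`-QRAC encoding of three `±1`-valued bits into one qubit. -/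
noncomputable def qrac3 (m : Fin 3 → ℝ) : Matrix (Fin 2) (Fin 2) ℂ :=
  (1 / 2 : ℂ) • ((1 : Matrix (Fin 2) (Fin 2) ℂ) +
    (1 / (Real.sqrt 3 : ℂ)) • ((m 0 : ℂ) • PX + (m 1 : ℂ) • PY + (m 2 : ℂ) • PZ))

/-- The vertex operator `P_v`: the weight-1 Pauli string acting as the Pauli matrix of slot
`(σ v).2` on qubit `(σ v).1` and as the identity on all other qubits. -/
noncomputable def vertexOp {V : Type*} (n : ℕ) (σ : V → Fin n × Fin 3) (v : V) :
    Matrix (Fin n → Fin 2) (Fin n → Fin 2) ℂ :=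
  Matrix.of fun x y =>
    pauliXYZ (σ v).2 (x (σ v).1) (y (σ v).1) *
      ∏ q ∈ Finset.univ.erase (σ v).1, (if x q = y q then (1 : ℂ) else 0)

/-- The three bits assigned to qubit `q`: `g_m(q)_j = m v` if `σ v = (q, j)` for the (necessarily
unique, by injectivity of `σ`) vertex `v`, and `1` if no vertex is assigned to `(q, j)`. -/
noncomputable def gfun {V : Type*} (n : ℕ) (σ : V → Fin n × Fin 3) (m : V → ℝ)
    (q : Fin n) (j : Fin 3) : ℝ :=
  if h : ∃ v, σ v = (q, j) then m h.choose else 1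

/-- The embedding `F(m)`: the product state with entries
`F(m)(x,y) = ∏_q f(g_m(q))(x_q, y_q)`. -/
noncomputable def embed {V : Type*} (n : ℕ) (σ : V → Fin n × Fin 3) (m : V → ℝ) :
    Matrix (Fin n → Fin 2) (Fin n → Fin 2) ℂ :=
  Matrix.of fun x y => ∏ q, qrac3 (gfun n σ m q) (x q) (y q)

/-- The relaxed Hamiltonian `H = Σ_{{u,v} ∈ E} (1/2)·(Id − 3·P_u·P_v)`. -/
noncomputable def relaxH {V : Type*} [Fintype V] [DecidableEq V] (n : ℕ)
    (σ : V → Fin n × Fin 3) (G : SimpleGraph V) [DecidableRel G.Adj] :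
    Matrix (Fin n → Fin 2) (Fin n → Fin 2) ℂ :=
  ∑ e ∈ G.edgeFinset, (1 / 2 : ℂ) •
    ((1 : Matrix (Fin n → Fin 2) (Fin n → Fin 2) ℂ) -
      (3 : ℂ) • (vertexOp n σ e.out.1 * vertexOp n σ e.out.2))

/-- The cut value `cut(m) = Σ_{{u,v} ∈ E} (1/2)·(1 − m(u)·m(v))`. -/
noncomputable def cutVal {V : Type*} [Fintype V] [DecidableEq V]
    (G : SimpleGraph V) [DecidableRel G.Adj] (m : V → ℝ) : ℝ :=
  ∑ e ∈ G.edgeFinset, (1 / 2 : ℝ) * (1 - m e.out.1 * m e.out.2)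


section Aux
open Matrix
open scoped Classical

noncomputable def tens (n : ℕ) (A : Fin n → Matrix (Fin 2) (Fin 2) ℂ) :
    Matrix (Fin n → Fin 2) (Fin n → Fin 2) ℂ :=
  Matrix.of fun x y => ∏ q, A q (x q) (y q)

lemma tens_mul (n : ℕ) (A B : Fin n → Matrix (Fin 2) (Fin 2) ℂ) :
    tens n A * tens n B = tens n (fun q => A q * B q) := by
  ext x y
  simp only [tens, Matrix.mul_apply, Matrix.of_apply, ← Finset.prod_mul_distrib]
  rw [Finset.prod_univ_sum]
  simp [Fintype.piFinset_univ]

lemma trace_tens (n : ℕ) (A : Fin n → Matrix (Fin 2) (Fin 2) ℂ) :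
    (tens n A).trace = ∏ q, (A q).trace := by
  simp only [Matrix.trace, Matrix.diag, tens, Matrix.of_apply]
  rw [Finset.prod_univ_sum]
  simp [Fintype.piFinset_univ]

lemma sqrt3_ne : (Real.sqrt 3 : ℂ) ≠ 0 := by
  simp [Complex.ofReal_ne_zero, Real.sqrt_ne_zero']

lemma trace_qrac3 (g : Fin 3 → ℝ) : (qrac3 g).trace = 1 := by
  simp [qrac3, Matrix.trace, Matrix.diag, Fin.sum_univ_two, PX, PY, PZ]
  ring

lemma trace_pauli_qrac3 (j : Fin 3) (g : Fin 3 → ℝ) :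
    (pauliXYZ j * qrac3 g).trace = (g j : ℂ) / (Real.sqrt 3 : ℂ) := by
  have h3 := sqrt3_ne
  fin_cases j <;>
    simp [pauliXYZ, qrac3, Matrix.trace, Matrix.diag, Matrix.mul_apply,
      Fin.sum_univ_two, Fin.sum_univ_three, PX, PY, PZ, Matrix.one_apply] <;>
  field_simp <;> ring_nf <;> simp [Complex.I_sq]

lemma vertexOp_eq_tens {V : Type*} (n : ℕ) (σ : V → Fin n × Fin 3) (v : V) :
    vertexOp n σ v = tens n (fun q => if q = (σ v).1 then pauliXYZ (σ v).2 else 1) := by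
  ext x y
  simp only [vertexOp, tens, Matrix.of_apply]
  rw [← Finset.mul_prod_erase Finset.univ _ (Finset.mem_univ (σ v).1)]
  simp only [if_pos rfl]
  congr 1
  refine Finset.prod_congr rfl fun q hq => ?_
  rw [if_neg (Finset.ne_of_mem_erase hq), Matrix.one_apply]

lemma embed_eq_tens {V : Type*} (n : ℕ) (σ : V → Fin n × Fin 3) (m : V → ℝ) :
    embed n σ m = tens n (fun q => qrac3 (gfun n σ m q)) := rfl

lemma gfun_self {V : Type*} (n : ℕ) (σ : V → Fin n × Fin 3) (hσ : Function.Injective σ)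
    (m : V → ℝ) (v : V) : gfun n σ m (σ v).1 (σ v).2 = m v := by
  have h : ∃ w, σ w = ((σ v).1, (σ v).2) := ⟨v, rfl⟩
  rw [gfun, dif_pos h]
  congr 1
  exact hσ (h.choose_spec.trans rfl)

lemma trace_embed {V : Type*} (n : ℕ) (σ : V → Fin n × Fin 3) (m : V → ℝ) :
    (embed n σ m).trace = 1 := by
  rw [embed_eq_tens, trace_tens]
  simp [trace_qrac3]

lemma trace_pp_embed {V : Type*} (n : ℕ) (σ : V → Fin n × Fin 3)
    (hσ : Function.Injective σ) (m : V → ℝ) (u v : V)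
    (hne : (σ u).1 ≠ (σ v).1) :
    (vertexOp n σ u * vertexOp n σ v * embed n σ m).trace = (m u * m v : ℂ) / 3 := by
  set a := (σ u).1
  set b := (σ v).1
  rw [vertexOp_eq_tens, vertexOp_eq_tens, embed_eq_tens, tens_mul, tens_mul, trace_tens]
  have hstep : ∀ q : Fin n,
      ((if q = a then pauliXYZ (σ u).2 else 1) * (if q = b then pauliXYZ (σ v).2 else 1)
        * qrac3 (gfun n σ m q)).trace =
      if q = a then (m u : ℂ) / (Real.sqrt 3 : ℂ)
      else if q = b then (m v : ℂ) / (Real.sqrt 3 : ℂ) else 1 := by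
    intro q
    by_cases hqa : q = a
    · subst hqa
      rw [if_pos rfl, if_pos rfl, if_neg hne, mul_one, trace_pauli_qrac3, gfun_self n σ hσ]
    · rw [if_neg hqa, if_neg hqa, one_mul]
      by_cases hqb : q = b
      · subst hqb
        rw [if_pos rfl, if_pos rfl, trace_pauli_qrac3, gfun_self n σ hσ]
      · rw [if_neg hqb, if_neg hqb, one_mul, trace_qrac3]
  rw [Finset.prod_congr rfl (fun q _ => hstep q)]
  rw [← Finset.mul_prod_erase Finset.univ _ (Finset.mem_univ a), if_pos rfl,
    ← Finset.mul_prod_erase _ _ (Finset.mem_erase.mpr ⟨Ne.symm hne, Finset.mem_univ b⟩),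
    if_neg (Ne.symm hne), if_pos rfl]
  rw [Finset.prod_eq_one]
  · have h33 : (Real.sqrt 3 : ℂ) * (Real.sqrt 3 : ℂ) = 3 := by
      rw [← Complex.ofReal_mul, Real.mul_self_sqrt (by norm_num)]
      norm_num
    rw [mul_one, div_mul_div_comm, h33]
  · intro q hq
    simp only [Finset.mem_erase] at hq
    rw [if_neg hq.2.1, if_neg hq.1]

end Aux

theorem relaxed_hamiltonian_commutes_with_cut
    {V : Type*} [Fintype V] [DecidableEq V] (n : ℕ)
    (G : SimpleGraph V) [DecidableRel G.Adj]
    (σ : V → Fin n × Fin 3) (hσ : Function.Injective σ)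
    (hadj : ∀ u v : V, G.Adj u v → (σ u).1 ≠ (σ v).1)
    (m : V → ℝ) (hm : ∀ v, m v = 1 ∨ m v = -1) :
    (relaxH n σ G * embed n σ m).trace = (cutVal G m : ℂ) := by
  classical
  rw [relaxH, Finset.sum_mul, Matrix.trace_sum]
  rw [cutVal, Complex.ofReal_sum]
  refine Finset.sum_congr rfl fun e he => ?_
  have hAdj : G.Adj e.out.1 e.out.2 := by
    rw [SimpleGraph.mem_edgeFinset] at he
    have h1 : Sym2.mk (Quot.out e).1 (Quot.out e).2 = e := Quot.out_eq e
    rw [← h1] at he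
    exact G.mem_edgeSet.mp he
  have hne := hadj _ _ hAdj
  rw [smul_mul_assoc, Matrix.trace_smul, sub_mul, one_mul, smul_mul_assoc,
    Matrix.trace_sub, Matrix.trace_smul, trace_embed,
    trace_pp_embed n σ hσ m _ _ hne]
  have h3 : (3 : ℂ) ≠ 0 := by norm_num
  push_cast
  field_simp
  simp only [smul_eq_mul]
  ring
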